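/- Let F be a field of characteristic not 2, K a quadratic field extension of F with nontrivial F-automorphism σ, and b ∈ K \ F. In A = Cay(K,b), the nucleus is contained in K: if x = (x0, x1) ∈ K × K satisfies [x, y, z] = [y, x, z] = [y, z, x] = 0 for all y, z ∈ K × K, then x1 = 0. -/

import Mathlib

/-- Multiplication of the nonassociative quaternion algebra `Cay(K, b)`:
`(u,v)·(u',v') = (uu' + b·v'·σ(v), σ(u)·v' + u'·v)`. -/
def cayMul {F K : Type*} [Field F] [Field K] [Algebra F K]
    (σ : K ≃ₐ[F] K) (b : K) (x y : K × K) : K × K :=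
  (x.1 * y.1 + b * y.2 * σ x.2, σ x.1 * y.2 + y.1 * x.2)

/-- If `σ` is a nontrivial automorphism of a quadratic extension `K/F`,
then any fixed point of `σ` lies in the image of `F`. -/
lemma fixed_mem_range {F K : Type*} [Field F] [Field K] [Algebra F K]
    (hdim : Module.finrank F K = 2)
    (σ : K ≃ₐ[F] K) (hσ : σ ≠ AlgEquiv.refl)
    {b : K} (hfix : σ b = b) : b ∈ Set.range (algebraMap F K) := by
  have hfd : FiniteDimensional F K := FiniteDimensional.of_finrank_eq_succ hdim
  set S : Subalgebra F K := AlgHom.equalizer (σ : K →ₐ[F] K) (AlgHom.id F K) with hS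
  have hmem : ∀ a : K, a ∈ S ↔ σ a = a := fun a => Iff.rfl
  set L : IntermediateField F K := S.toIntermediateField
    (fun a ha => by rw [hmem] at ha ⊢; rw [map_inv₀, ha]) with hLdef
  have hmemL : ∀ a : K, a ∈ L ↔ σ a = a := fun a => Iff.rfl
  have hbL : b ∈ L := (hmemL b).mpr hfix
  have hLne : L ≠ ⊤ := by
    intro h
    apply hσ
    ext a
    exact (hmemL a).mp (h ▸ IntermediateField.mem_top)
  have hlt : Module.finrank F L < Module.finrank F K := by
    have : Subalgebra.toSubmodule L.toSubalgebra < ⊤ := by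
      rw [lt_top_iff_ne_top]
      intro h
      apply hLne
      rw [← IntermediateField.toSubalgebra_injective.eq_iff]
      apply Subalgebra.toSubmodule_injective
      simpa using h
    exact Submodule.finrank_lt this.ne
  have hpos : 0 < Module.finrank F L := Module.finrank_pos
  have h1 : Module.finrank F L = 1 := by omega
  have : L = ⊥ := IntermediateField.finrank_eq_one_iff.mp h1
  rw [this, IntermediateField.mem_bot] at hbL
  exact hbL

/-- In the nonassociative quaternion algebra `Cay(K,b)`, the nucleus is contained in `K`:
if `x = (x0, x1)` associates with all pairs of elements (all three associators vanish),
then `x1 = 0`. -/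
theorem cay_nucleus_subset_K {F K : Type*} [Field F] [Field K] [Algebra F K]
    (hchar : ringChar F ≠ 2)
    (hdim : Module.finrank F K = 2)
    (σ : K ≃ₐ[F] K) (hσ : σ ≠ AlgEquiv.refl)
    (b : K) (hb : b ∉ Set.range (algebraMap F K))
    (x : K × K)
    (hx : ∀ y z : K × K,
      cayMul σ b (cayMul σ b x y) z = cayMul σ b x (cayMul σ b y z) ∧
      cayMul σ b (cayMul σ b y x) z = cayMul σ b y (cayMul σ b x z) ∧
      cayMul σ b (cayMul σ b y z) x = cayMul σ b y (cayMul σ b z x)) :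
    x.2 = 0 := by
  have h := congrArg Prod.snd (hx (0,1) (0,1)).2.1
  simp [cayMul] at h
  -- `simp` reduces `h` to `σ b = b ∨ x.2 = 0`
  have hσb : σ b ≠ b := fun hfix => hb (fixed_mem_range hdim σ hσ hfix)
  tauto
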